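/- (Third derivative vanishes in tangent directions along a set of minimizers.) Let L : ℝ^d → ℝ be three times continuously differentiable. Let θ ∈ ℝ^d, let Γ ⊆ ℝ^d be a set every point of which is a local minimizer of L, and let u, v, w ∈ ℝ^d be vectors such that each of u, v, w and u + v is the velocity at time 0 of a twice continuously differentiable curve γ : (−1, 1) → ℝ^d with γ(0) = θ and γ(t) ∈ Γ for all t. Then the symmetric trilinear form given by the third derivative of L at θ satisfies ∇³L(θ)[u, v, w] = 0. -/

import Mathlib

noncomputable section

open Set

/-- Helper: if `g` is `C²` and vanishes on `Γ`, and `γ` is a `C²` curve in `Γ` through `θ`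
with velocity `a` at `0`, then `(∇g)(θ) a = 0` and
`∇²g(θ)[a,a] = -(∇g)(θ) b` for `b` the acceleration. -/
theorem helper18 {E F : Type*} [NormedAddCommGroup E] [NormedSpace ℝ E]
    [NormedAddCommGroup F] [NormedSpace ℝ F]
    {g : E → F} (hg : ContDiff ℝ 2 g) {Γ : Set E} (hΓz : ∀ x ∈ Γ, g x = 0)
    {γ : ℝ → E} {θ a : E} (h0 : γ 0 = θ)
    (hmem : ∀ t ∈ Set.Ioo (-1:ℝ) 1, γ t ∈ Γ)
    (hC2 : ContDiffOn ℝ 2 γ (Set.Ioo (-1:ℝ) 1))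
    (hder : HasDerivAt γ a 0) :
    fderiv ℝ g θ a = 0 ∧
      ∃ b : E, fderiv ℝ (fderiv ℝ g) θ a a + fderiv ℝ g θ b = 0 := by
  have hIoo : Set.Ioo (-1:ℝ) 1 ∈ nhds (0:ℝ) := isOpen_Ioo.mem_nhds (by norm_num)
  have hgz : ∀ t ∈ Set.Ioo (-1:ℝ) 1, g (γ t) = 0 := fun t ht => hΓz _ (hmem t ht)
  have hγdiff : ∀ t ∈ Set.Ioo (-1:ℝ) 1, HasDerivAt γ (deriv γ t) t := by
    intro t ht
    have h1 : ContDiffAt ℝ 2 γ t := hC2.contDiffAt (isOpen_Ioo.mem_nhds ht)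
    exact (h1.differentiableAt (by norm_num)).hasDerivAt
  have hgdiff : Differentiable ℝ g := hg.differentiable (by norm_num)
  have hfd : Differentiable ℝ (fderiv ℝ g) :=
    (hg.fderiv_right (m := 1) (by norm_num)).differentiable (by norm_num)
  have hcomp : ∀ t ∈ Set.Ioo (-1:ℝ) 1,
      HasDerivAt (fun s => g (γ s)) (fderiv ℝ g (γ t) (deriv γ t)) t :=
    fun t ht => (hgdiff (γ t)).hasFDerivAt.comp_hasDerivAt t (hγdiff t ht)
  have hd0 : deriv γ 0 = a := hder.deriv
  have hφt : ∀ t ∈ Set.Ioo (-1:ℝ) 1, fderiv ℝ g (γ t) (deriv γ t) = 0 := by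
    intro t ht
    have hz : (fun s => g (γ s)) =ᶠ[nhds t] (fun _ => (0:F)) := by
      filter_upwards [isOpen_Ioo.mem_nhds ht] with s hs using hgz s hs
    have h0t : HasDerivAt (fun s => g (γ s)) 0 t :=
      (hasDerivAt_const t (0:F)).congr_of_eventuallyEq hz
    exact (hcomp t ht).unique h0t
  constructor
  · have := hφt 0 (by norm_num)
    rwa [hd0, h0] at this
  · have hγ' : ContDiffOn ℝ 1 (deriv γ) (Set.Ioo (-1:ℝ) 1) :=
      hC2.deriv_of_isOpen isOpen_Ioo (by norm_num)
    have hb : DifferentiableAt ℝ (deriv γ) 0 :=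
      (hγ'.contDiffAt hIoo).differentiableAt (by norm_num)
    refine ⟨deriv (deriv γ) 0, ?_⟩
    have hb' : HasDerivAt (deriv γ) (deriv (deriv γ) 0) 0 := hb.hasDerivAt
    have hc : HasDerivAt (fun t => fderiv ℝ g (γ t)) (fderiv ℝ (fderiv ℝ g) θ a) 0 := by
      have := (hfd (γ 0)).hasFDerivAt.comp_hasDerivAt 0 hder
      rwa [h0] at this
    have hφ : HasDerivAt (fun t => fderiv ℝ g (γ t) (deriv γ t))
        (fderiv ℝ (fderiv ℝ g) θ a a + fderiv ℝ g θ (deriv (deriv γ) 0)) 0 := by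
      have := hc.clm_apply hb'
      rwa [hd0, h0] at this
    have hφ0 : HasDerivAt (fun t => fderiv ℝ g (γ t) (deriv γ t)) 0 0 := by
      refine (hasDerivAt_const (0:ℝ) 0).congr_of_eventuallyEq ?_
      filter_upwards [hIoo] with t ht using hφt t ht
    exact hφ.unique hφ0

/-- `tangentAt Γ θ a`: `a` is the velocity at time `0` of a twice continuously
differentiable curve `γ : (−1, 1) → ℝ^d` with `γ(0) = θ` lying in `Γ`. -/
def tangentAt {d : ℕ} (Γ : Set (EuclideanSpace ℝ (Fin d)))
    (θ a : EuclideanSpace ℝ (Fin d)) : Prop :=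
  ∃ γ : ℝ → EuclideanSpace ℝ (Fin d), γ 0 = θ ∧
    (∀ t ∈ Set.Ioo (-1 : ℝ) 1, γ t ∈ Γ) ∧
    ContDiffOn ℝ 2 γ (Set.Ioo (-1 : ℝ) 1) ∧
    HasDerivAt γ a 0

/-- The third derivative vanishes in tangent directions along a set of
minimizers. If every point of `Γ` is a local minimizer of the `C³` function `L`, and each
of `u`, `v`, `w` and `u + v` is tangent to `Γ` at `θ` (velocity of a `C²` curve in `Γ`
through `θ`), then `∇³L(θ)[u, v, w] = 0`. -/
theorem statement18 {d : ℕ} (L : EuclideanSpace ℝ (Fin d) → ℝ) (hL : ContDiff ℝ 3 L)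
    (Γ : Set (EuclideanSpace ℝ (Fin d))) (hΓ : ∀ x ∈ Γ, IsLocalMin L x)
    (θ u v w : EuclideanSpace ℝ (Fin d))
    (hu : tangentAt Γ θ u) (hv : tangentAt Γ θ v) (hw : tangentAt Γ θ w)
    (huv : tangentAt Γ θ (u + v)) :
    iteratedFDeriv ℝ 3 L θ ![u, v, w] = 0 := by

  have hF1 : ContDiff ℝ 2 (iteratedFDeriv ℝ 1 L) :=
    hL.iteratedFDeriv_right (m := 2) (i := 1) (by norm_num)
  have hF1z : ∀ x ∈ Γ, iteratedFDeriv ℝ 1 L x = 0 := by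
    intro x hx
    ext m
    simp [iteratedFDeriv_one_apply, (hΓ x hx).fderiv_eq_zero]
  have key : ∀ a : EuclideanSpace ℝ (Fin d), tangentAt Γ θ a →
      fderiv ℝ (iteratedFDeriv ℝ 1 L) θ a = 0 ∧
        ∃ b : EuclideanSpace ℝ (Fin d),
          fderiv ℝ (fderiv ℝ (iteratedFDeriv ℝ 1 L)) θ a a
          + fderiv ℝ (iteratedFDeriv ℝ 1 L) θ b = 0 := by
    rintro a ⟨γ, h0, hmem, hC2, hder⟩
    exact helper18 hF1 hF1z h0 hmem hC2 hder
  set G := fderiv ℝ (iteratedFDeriv ℝ 1 L) θ with hGdef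
  set S := fderiv ℝ (fderiv ℝ (iteratedFDeriv ℝ 1 L)) θ with hSdef
  have ht1 : (Fin.tail ![u, v, w] : Fin 2 → EuclideanSpace ℝ (Fin d)) = ![v, w] := by
    ext i
    fin_cases i <;> rfl
  have hbridge : iteratedFDeriv ℝ 3 L θ ![u, v, w] = S u v ![w] := by
    have h1 : iteratedFDeriv ℝ 3 L θ ![u, v, w]
        = fderiv ℝ (iteratedFDeriv ℝ 2 L) θ u (Fin.tail ![u, v, w]) :=
      iteratedFDeriv_succ_apply_left _
    have h2 : iteratedFDeriv ℝ 2 L =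
        (continuousMultilinearCurryLeftEquiv ℝ
          (fun _ : Fin 2 => EuclideanSpace ℝ (Fin d)) ℝ).symm ∘
          fderiv ℝ (iteratedFDeriv ℝ 1 L) := iteratedFDeriv_succ_eq_comp_left
    have h3 := LinearIsometryEquiv.comp_fderiv
      (continuousMultilinearCurryLeftEquiv ℝ
        (fun _ : Fin 2 => EuclideanSpace ℝ (Fin d)) ℝ).symm
      (𝕜 := ℝ) (f := fderiv ℝ (iteratedFDeriv ℝ 1 L)) (x := θ)
    rw [h1, ht1, h2, h3]
    rfl
  have hsymS : ∀ x y : EuclideanSpace ℝ (Fin d), S x y = S y x := by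
    intro x y
    have hs : IsSymmSndFDerivAt ℝ (iteratedFDeriv ℝ 1 L) θ :=
      hF1.contDiffAt.isSymmSndFDerivAt (by norm_num)
    exact hs x y
  have hGsym : ∀ x y : EuclideanSpace ℝ (Fin d), G x ![y] = G y ![x] := by
    have hF1eq : iteratedFDeriv ℝ 1 L =
        (continuousMultilinearCurryFin1 ℝ (EuclideanSpace ℝ (Fin d)) ℝ).symm ∘ fderiv ℝ L := by
      funext x
      ext m
      simp [iteratedFDeriv_one_apply]
    have h3 := LinearIsometryEquiv.comp_fderiv
      (continuousMultilinearCurryFin1 ℝ (EuclideanSpace ℝ (Fin d)) ℝ).symm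
      (𝕜 := ℝ) (f := fderiv ℝ L) (x := θ)
    have hG2 : G = ((continuousMultilinearCurryFin1 ℝ (EuclideanSpace ℝ (Fin d)) ℝ).symm :
        (EuclideanSpace ℝ (Fin d) →L[ℝ] ℝ) →L[ℝ] _).comp (fderiv ℝ (fderiv ℝ L) θ) := by
      rw [hGdef, hF1eq, h3]
    have hsL : IsSymmSndFDerivAt ℝ L θ := hL.contDiffAt.isSymmSndFDerivAt (by norm_num)
    intro x y
    rw [hG2]
    simpa using hsL x y
  obtain ⟨hu1, bu, hu2⟩ := key u hu
  obtain ⟨hv1, bv, hv2⟩ := key v hv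
  obtain ⟨hw1, -⟩ := key w hw
  obtain ⟨-, buv, huv2⟩ := key (u + v) huv
  have hGw : ∀ z : EuclideanSpace ℝ (Fin d), G z ![w] = 0 := by
    intro z
    rw [hGsym z w, hw1]
    simp
  have hexp : S (u + v) (u + v) = S u u + S u v + S v u + S v v := by
    simp only [map_add, ContinuousLinearMap.add_apply]
    abel

  have hsum : S u v ![w] + S v u ![w] = 0 := by
    have h1 : S u u = -G bu := eq_neg_of_add_eq_zero_left hu2
    have h2 : S v v = -G bv := eq_neg_of_add_eq_zero_left hv2
    have h3 : S (u + v) (u + v) = -G buv := eq_neg_of_add_eq_zero_left huv2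
    rw [h1, h2, h3] at hexp
    have h4 : S u v + S v u = -G buv + G bu + G bv := by
      rw [hexp]
      abel
    calc S u v ![w] + S v u ![w]
        = (S u v + S v u) ![w] := by
          simp [ContinuousMultilinearMap.add_apply]
      _ = (-G buv + G bu + G bv) ![w] := by rw [h4]
      _ = -(G buv ![w]) + G bu ![w] + G bv ![w] := by
          simp [ContinuousMultilinearMap.add_apply, ContinuousMultilinearMap.neg_apply]
      _ = 0 := by rw [hGw, hGw, hGw]; simp
  rw [hsymS v u] at hsum
  rw [hbridge]
  exact add_self_eq_zero.mp hsum
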